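/- For every j ≥ 0, the formal power series identity ∑_{i=0}^{∞} (C(i+j, i)/i!) X^i = L_j(−X) · exp(X) holds, where L_j is the j-th Laguerre polynomial. -/

import Mathlib

open Polynomial PowerSeries

/-- The `j`-th Laguerre polynomial `L_j(X) = ∑_{k=0}^{j} C(j,k)(−X)^k/k!`. -/
noncomputable def laguerre (j : ℕ) : Polynomial ℚ :=
  ∑ k ∈ Finset.range (j + 1), Polynomial.C ((j.choose k : ℚ) / k.factorial) * (-Polynomial.X) ^ k

lemma laguerre_comp (j : ℕ) : (laguerre j).comp (-Polynomial.X) =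
    ∑ k ∈ Finset.range (j + 1), Polynomial.C ((j.choose k : ℚ) / k.factorial) * Polynomial.X ^ k := by
  simp [laguerre, Polynomial.sum_comp, Polynomial.mul_comp, Polynomial.pow_comp,
    Polynomial.neg_comp, Polynomial.X_comp]

lemma coeff_laguerre_comp (j n : ℕ) :
    ((laguerre j).comp (-Polynomial.X)).coeff n = (j.choose n : ℚ) / n.factorial := by
  rw [laguerre_comp, Polynomial.finset_sum_coeff]
  simp only [Polynomial.coeff_C_mul, Polynomial.coeff_X_pow]
  rw [Finset.sum_eq_single n]
  · simp
  · intro b _ hb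
    rw [if_neg (Ne.symm hb), mul_zero]
  · intro h
    simp only [Finset.mem_range, not_lt] at h
    rw [Nat.choose_eq_zero_of_lt (by omega)]
    simp

/-- The tabloidal form: `∑_{i≥0} (C(i+j,i)/i!) X^i = L_j(−X)·exp(X)` as formal power series. -/
theorem tabloidal_laguerre (j : ℕ) :
    PowerSeries.mk (fun i => ((i + j).choose i : ℚ) / i.factorial) =
      ((laguerre j).comp (-Polynomial.X) : Polynomial ℚ) * PowerSeries.exp ℚ := by
  ext n
  rw [PowerSeries.coeff_mk, PowerSeries.coeff_mul]
  simp only [Polynomial.coeff_coe, coeff_laguerre_comp, PowerSeries.coeff_exp]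
  have hv := Nat.add_choose_eq j n n
  have h1 : ((n + j).choose n : ℚ) = ∑ ij ∈ Finset.HasAntidiagonal.antidiagonal n, (j.choose ij.1 : ℚ) * n.choose ij.2 := by
    rw [add_comm n j]
    exact_mod_cast hv
  rw [h1, Finset.sum_div, Finset.sum_congr rfl]
  rintro ⟨a, b⟩ hab
  simp only [Finset.HasAntidiagonal.mem_antidiagonal] at hab
  have key : (n.choose b : ℚ) * b.factorial * a.factorial = n.factorial := by
    have := Nat.choose_mul_factorial_mul_factorial (show b ≤ n by omega)
    rw [show n - b = a by omega] at this
    exact_mod_cast this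
  have ha : (a.factorial : ℚ) ≠ 0 := by exact_mod_cast a.factorial_ne_zero
  have hbf : (b.factorial : ℚ) ≠ 0 := by exact_mod_cast b.factorial_ne_zero
  have hnf : (n.factorial : ℚ) ≠ 0 := by exact_mod_cast n.factorial_ne_zero
  simp only [map_div₀, map_one, map_natCast]
  field_simp
  rw [← key]; ring
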